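/- (Theorem 3.) Let Y and (Ŷₙ)ₙ be random variables, each nonnegative almost surely, with continuous (atomless) cumulative distribution functions F and Fₙ, and suppose δₙ := sup_{y ∈ [0, ∞)} |Fₙ(y) − F(y)| → 0 as n → ∞. Let l̄ > 0, let a : [0, l̄] → ℝ be monotone with 0 ≤ a(l) ≤ a(l̄) < ∞ for all l and a(l) → 0 as l → 0, and let {g_l}_{l ∈ [0, l̄]} be a family of functions g_l : ℝ → ℝ, each differentiable on [0, a(l̄)] with |g_l'(y)| ≤ K for all y ∈ [0, a(l̄)] and all l, and uniformly bounded: |g_l(y)| ≤ M := g_{l̄}(0) < ∞. Define r₃(l) = E[g_l(Y) · 1{Y < a(l)}] and r̂₃,ₙ(l) = E[g_l(Ŷₙ) · 1{Ŷₙ < a(l)}]. Then sup_{l ∈ [0, l̄]} |r̂₃,ₙ(l) − r₃(l)| ≤ (2M + K·a(l̄))·δₙ, and consequently sup_{l ∈ [0, l̄]} |r̂₃,ₙ(l) − r₃(l)| → 0 as n → ∞. -/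

import Mathlib

open MeasureTheory Filter Set

lemma atomless_of_cont_cdf (μ : Measure ℝ) [IsProbabilityMeasure μ]
    (F : ℝ → ℝ) (hF : ∀ y, F y = (μ (Set.Iic y)).toReal) (hFc : Continuous F) (t : ℝ) :
    μ {t} = 0 := by
  have hmono : Monotone (fun n : ℕ => Set.Iic (t - 1/(n+1))) := by
    intro m n hmn
    apply Set.Iic_subset_Iic.2
    have hc : (m:ℝ) ≤ (n:ℝ) := Nat.cast_le.2 hmn
    have : (1:ℝ)/(n+1) ≤ 1/(m+1) := by
      apply one_div_le_one_div_of_le <;> linarith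
    linarith
  have hUnion : (⋃ n : ℕ, Set.Iic (t - 1/(n+1))) = Set.Iio t := by
    ext x
    simp only [Set.mem_iUnion, Set.mem_Iic, Set.mem_Iio]
    constructor
    · rintro ⟨n, hn⟩
      have : (0:ℝ) < 1/(n+1) := by positivity
      linarith
    · intro hx
      obtain ⟨n, hn⟩ := exists_nat_one_div_lt (show (0:ℝ) < t - x by linarith)
      exact ⟨n, by linarith [hn]⟩
  have htend : Tendsto (fun n : ℕ => μ (Set.Iic (t - 1/(n+1)))) atTop (nhds (μ (Set.Iio t))) := by
    rw [← hUnion]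
    exact tendsto_measure_iUnion_atTop hmono
  have htoReal : Tendsto (fun n : ℕ => (μ (Set.Iic (t - 1/(n+1)))).toReal) atTop
      (nhds ((μ (Set.Iio t)).toReal)) :=
    (ENNReal.tendsto_toReal (measure_ne_top μ _)).comp htend
  have harg : Tendsto (fun n : ℕ => t - 1/((n:ℝ)+1)) atTop (nhds t) := by
    have : Tendsto (fun n : ℕ => 1/((n:ℝ)+1)) atTop (nhds 0) := tendsto_one_div_add_atTop_nhds_zero_nat
    simpa using (tendsto_const_nhds (x := t)).sub this
  have hF' : Tendsto (fun n : ℕ => F (t - 1/((n:ℝ)+1))) atTop (nhds (F t)) :=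
    (hFc.tendsto t).comp harg
  have heq : (μ (Set.Iio t)).toReal = F t := by
    apply tendsto_nhds_unique htoReal
    simpa only [hF] using hF'
  have h2 : μ (Set.Iio t) = μ (Set.Iic t) := by
    have := heq.trans (hF t)
    exact (ENNReal.toReal_eq_toReal_iff' (measure_ne_top μ _) (measure_ne_top μ _)).1 this
  have h3 : μ (Set.Iic t) = μ (Set.Iio t) + μ {t} := by
    rw [← measure_union (by simp only [Set.disjoint_left]; intro x hx hx2; simp only [Set.mem_Iio] at hx; simp only [Set.mem_singleton_iff] at hx2; exact absurd hx2 (ne_of_lt hx)) (measurableSet_singleton t)]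
    congr 1
    ext x; simp [Set.mem_Iio, le_iff_lt_or_eq]
  have hne := measure_ne_top μ (Set.Iio t)
  rw [← h2] at h3
  exact (ENNReal.add_right_inj hne).1 (by simpa using h3.symm)

lemma cdf_eq_Ico (μ : Measure ℝ) [IsProbabilityMeasure μ] (hμ0 : μ (Set.Iio 0) = 0)
    (F : ℝ → ℝ) (hF : ∀ y, F y = (μ (Set.Iic y)).toReal) (hFc : Continuous F)
    {t : ℝ} (ht : 0 ≤ t) : (μ (Set.Ico 0 t)).toReal = F t := by
  have hatom := atomless_of_cont_cdf μ F hF hFc t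
  have h1 : Set.Iic t = Set.Iio 0 ∪ Set.Icc 0 t := by
    ext x; simp only [Set.mem_Iic, Set.mem_union, Set.mem_Iio, Set.mem_Icc]
    constructor
    · intro hx; by_cases h : x < 0
      · exact Or.inl h
      · exact Or.inr ⟨le_of_not_gt h, hx⟩
    · rintro (h | ⟨_, h⟩) <;> linarith
  have h2 : Set.Icc 0 t = Set.Ico 0 t ∪ {t} := by
    ext x; simp only [Set.mem_Icc, Set.mem_union, Set.mem_Ico, Set.mem_singleton_iff]
    constructor
    · rintro ⟨h0, h1⟩
      rcases lt_or_eq_of_le h1 with h | h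
      · exact Or.inl ⟨h0, h⟩
      · exact Or.inr h
    · rintro (⟨h0, h1⟩ | rfl) <;> constructor <;> first | linarith | rfl
  have key : μ (Set.Iic t) = μ (Set.Ico 0 t) := by
    rw [h1, h2]
    apply le_antisymm
    · calc μ (Set.Iio 0 ∪ (Set.Ico 0 t ∪ {t})) ≤ μ (Set.Iio 0) + μ (Set.Ico 0 t ∪ {t}) :=
          measure_union_le _ _
        _ ≤ 0 + (μ (Set.Ico 0 t) + μ {t}) := by
          gcongr
          · exact le_of_eq hμ0
          · exact measure_union_le _ _
        _ = μ (Set.Ico 0 t) := by rw [hatom]; ring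
    · exact measure_mono (fun x hx => Or.inr (Or.inl hx))
  rw [← key, hF]

lemma risk_repr (μ : Measure ℝ) [IsProbabilityMeasure μ] (hμ0 : μ (Set.Iio 0) = 0)
    (F : ℝ → ℝ) (hF : ∀ y, F y = (μ (Set.Iic y)).toReal) (hFc : Continuous F)
    (A : ℝ) (G : ℝ → ℝ) (hG : DifferentiableOn ℝ G (Set.Icc 0 A))
    (K : ℝ) (hK : ∀ y ∈ Set.Icc (0:ℝ) A, |derivWithin G (Set.Icc 0 A) y| ≤ K)
    (b : ℝ) (hb0 : 0 ≤ b) (hbA : b ≤ A) :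
    ∫ y, (Set.Iio b).indicator G y ∂μ
      = G b * F b - ∫ t in Set.Ioc 0 b, derivWithin G (Set.Icc 0 A) t * F t := by
  set D : ℝ → ℝ := derivWithin G (Set.Icc 0 A) with hD
  set S : Set ℝ := Set.Ico 0 b with hS
  set T : Set ℝ := Set.Ioc 0 b with hT
  have hA : (0:ℝ) ≤ A := le_trans hb0 hbA
  -- D agrees with deriv G a.e. on T
  have hDeq : ∀ t ∈ Set.Ioo 0 A, D t = deriv G t := fun t ht =>
    derivWithin_of_mem_nhds (Icc_mem_nhds ht.1 ht.2)
  have hDae : D =ᵐ[volume.restrict T] deriv G := by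
    have hAe : ∀ᵐ t : ℝ ∂(volume.restrict T), t ≠ A := by
      refine ae_restrict_of_ae ?_
      have : volume ({A} : Set ℝ) = 0 := Real.volume_singleton
      rw [ae_iff]
      convert this using 2
      ext x; simp
    have hmem : ∀ᵐ t : ℝ ∂(volume.restrict T), t ∈ T := ae_restrict_mem measurableSet_Ioc
    filter_upwards [hAe, hmem] with t htA ht
    exact hDeq t ⟨ht.1, lt_of_le_of_ne (le_trans ht.2 hbA) htA⟩
  have hDaesm : AEStronglyMeasurable D (volume.restrict T) :=
    ((measurable_deriv G).aestronglyMeasurable).congr hDae.symm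
  -- FTC
  have hFTC : ∀ y ∈ S, ∫ t in y..b, D t = G b - G y := by
    intro y hy
    have hyb : y ≤ b := le_of_lt hy.2
    have hcont : ContinuousOn G (Set.Icc y b) :=
      hG.continuousOn.mono (Set.Icc_subset_Icc hy.1 hbA)
    have hderiv : ∀ x ∈ Set.Ioo y b, HasDerivWithinAt G (D x) (Set.Ioi x) x := by
      intro x hx
      have hx0 : (0:ℝ) ≤ x := le_trans hy.1 (le_of_lt hx.1)
      have hxA : x < A := lt_of_lt_of_le hx.2 hbA
      have h1 : HasDerivWithinAt G (D x) (Set.Icc 0 A) x :=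
        (hG x ⟨hx0, le_of_lt hxA⟩).hasDerivWithinAt
      refine h1.mono_of_mem_nhdsWithin ?_
      refine mem_nhdsWithin.mpr ⟨Set.Iio A, isOpen_Iio, hxA, ?_⟩
      rintro z ⟨hz1, hz2⟩
      exact ⟨le_trans hx0 (le_of_lt hz2), le_of_lt hz1⟩
    have hint : IntervalIntegrable D volume y b := by
      rw [intervalIntegrable_iff_integrableOn_Ioc_of_le hyb]
      have hsub : Set.Ioc y b ⊆ T := Set.Ioc_subset_Ioc_left hy.1
      refine Integrable.mono' (integrable_const K) (hDaesm.mono_measure (Measure.restrict_mono hsub le_rfl)) ?_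
      filter_upwards [ae_restrict_mem measurableSet_Ioc] with t ht
      exact hK t ⟨le_trans hy.1 (le_of_lt ht.1), le_trans ht.2 hbA⟩
    have := intervalIntegral.integral_eq_sub_of_hasDeriv_right_of_le hyb hcont hderiv hint
    rw [this]
  -- product function
  set f : ℝ × ℝ → ℝ := fun p => if p.1 < p.2 then D p.2 else 0 with hf2
  set P : Measure (ℝ × ℝ) := (μ.restrict S).prod (volume.restrict T) with hP
  have hTfin : volume T < ⊤ := by
    rw [hT, Real.volume_Ioc]; exact ENNReal.ofReal_lt_top
  haveI : Fact (volume T < ⊤) := ⟨hTfin⟩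
  haveI : IsFiniteMeasure (volume.restrict T) := Restrict.isFiniteMeasure volume
  -- a.e. facts on P
  have hprod_null : ∀ (N : Set ℝ), volume.restrict T N = 0 → P {p : ℝ × ℝ | p.2 ∈ N} = 0 := by
    intro N hN
    obtain ⟨N', hsub, hmeas, hN'⟩ := exists_measurable_superset_of_null hN
    have : P (Set.univ ×ˢ N') = 0 := by
      rw [hP, Measure.prod_prod, hN', mul_zero]
    refine measure_mono_null ?_ this
    intro p hp
    exact ⟨trivial, hsub hp⟩
  have hDP : (fun p : ℝ × ℝ => D p.2) =ᵐ[P] (fun p => deriv G p.2) := by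
    rw [Filter.eventuallyEq_iff_exists_mem]
    refine ⟨{p : ℝ × ℝ | p.2 ∈ {t | D t = deriv G t}}, ?_, fun p hp => hp⟩
    rw [mem_ae_iff]
    have hcompl : {p : ℝ × ℝ | p.2 ∈ {t | D t = deriv G t}}ᶜ = {p : ℝ × ℝ | p.2 ∈ {t | D t = deriv G t}ᶜ} := by
      ext p; simp
    rw [hcompl]
    apply hprod_null
    have := hDae
    rw [Filter.eventuallyEq_iff_exists_mem] at this
    obtain ⟨s, hs, hseq⟩ := this
    rw [mem_ae_iff] at hs
    refine measure_mono_null ?_ hs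
    intro t ht hts
    exact ht (hseq hts)
  have hsnd_mem : ∀ᵐ p : ℝ × ℝ ∂P, p.2 ∈ T := by
    rw [ae_iff]
    have hcompl : {p : ℝ × ℝ | ¬ p.2 ∈ T} = {p : ℝ × ℝ | p.2 ∈ Tᶜ} := by ext p; simp
    rw [hcompl]
    apply hprod_null
    rw [Measure.restrict_apply' measurableSet_Ioc]
    have : Tᶜ ∩ T = ∅ := by ext t; simp
    rw [this, measure_empty]
  have hfaesm : AEStronglyMeasurable f P := by
    have hu : MeasurableSet {p : ℝ × ℝ | p.1 < p.2} := measurableSet_lt measurable_fst measurable_snd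
    have h1 : AEStronglyMeasurable (fun p : ℝ × ℝ => D p.2) P :=
      ((measurable_deriv G).comp measurable_snd).aestronglyMeasurable.congr hDP.symm
    have : f = {p : ℝ × ℝ | p.1 < p.2}.indicator (fun p => D p.2) := by
      ext p
      by_cases h : p.1 < p.2 <;> simp [hf2, h, Set.indicator_apply]
    rw [this]
    exact h1.indicator hu
  have hfint : Integrable f P := by
    refine Integrable.mono' (integrable_const K) hfaesm ?_
    filter_upwards [hsnd_mem] with p hp
    have hDb : |D p.2| ≤ K := hK p.2 ⟨le_of_lt hp.1, le_trans hp.2 hbA⟩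
    have hK0 : 0 ≤ K := le_trans (abs_nonneg _) hDb
    rw [hf2]
    by_cases h : p.1 < p.2 <;> simp [h, Real.norm_eq_abs, hDb, hK0]
  -- inner integral function
  set H : ℝ → ℝ := fun y => ∫ t, f (y, t) ∂(volume.restrict T) with hH
  have hHeq : ∀ y ∈ S, H y = G b - G y := by
    intro y hy
    have he : (fun t => f (y, t)) = (Set.Ioi y).indicator D := by
      ext t
      simp [hf2, Set.indicator_apply, Set.mem_Ioi]
    have : H y = ∫ t in T ∩ Set.Ioi y, D t := by
      rw [hH]
      simp only [he]
      exact setIntegral_indicator measurableSet_Ioi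
    rw [this]
    have hTI : T ∩ Set.Ioi y = Set.Ioc y b := by
      ext t
      simp only [hT, Set.mem_inter_iff, Set.mem_Ioc, Set.mem_Ioi]
      constructor
      · rintro ⟨⟨_, h2⟩, h3⟩; exact ⟨h3, h2⟩
      · rintro ⟨h1, h2⟩; exact ⟨⟨lt_of_le_of_lt hy.1 h1, h2⟩, h1⟩
    rw [hTI, ← intervalIntegral.integral_of_le (le_of_lt hy.2)]
    exact hFTC y hy
  have hHint : Integrable H (μ.restrict S) := hfint.integral_prod_left
  have hswap : ∫ y, H y ∂(μ.restrict S)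
      = ∫ t, (∫ y, f (y, t) ∂(μ.restrict S)) ∂(volume.restrict T) := by
    apply integral_integral_swap (f := fun y t => f (y, t))
    convert hfint using 1
    rfl
  have hinner : ∀ t ∈ T, (∫ y, f (y, t) ∂(μ.restrict S)) = D t * F t := by
    intro t ht
    have he : (fun y => f (y, t)) = (Set.Iio t).indicator (fun _ => D t) := by
      ext y
      simp [hf2, Set.indicator_apply, Set.mem_Iio]
    rw [he, setIntegral_indicator measurableSet_Iio]
    have hSI : S ∩ Set.Iio t = Set.Ico 0 t := by
      ext y
      simp only [hS, Set.mem_inter_iff, Set.mem_Ico, Set.mem_Iio]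
      constructor
      · rintro ⟨⟨h1, _⟩, h3⟩; exact ⟨h1, h3⟩
      · rintro ⟨h1, h2⟩; exact ⟨⟨h1, lt_of_lt_of_le h2 ht.2⟩, h2⟩
    rw [hSI, setIntegral_const, measureReal_def, cdf_eq_Ico μ hμ0 F hF hFc (le_of_lt ht.1)]
    rw [smul_eq_mul]; ring
  -- main chain
  have h0 : ∫ y, (Set.Iio b).indicator G y ∂μ = ∫ y in S, G y ∂μ := by
    have hnn : ∀ᵐ y ∂μ, (0:ℝ) ≤ y := by
      rw [ae_iff]
      convert hμ0 using 2
      ext y; simp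
    have hae : (Set.Iio b).indicator G =ᵐ[μ] S.indicator G := by
      filter_upwards [hnn] with y hy
      by_cases h : y < b
      · simp [Set.indicator_apply, h, hy, hS]
      · simp [Set.indicator_apply, h, hS]
    rw [integral_congr_ae hae, integral_indicator measurableSet_Ico]
  rw [h0]
  have h1 : ∫ y in S, G y ∂μ = ∫ y in S, (G b - H y) ∂μ :=
    setIntegral_congr_fun measurableSet_Ico (fun y hy => by rw [hHeq y hy]; ring)
  rw [h1, integral_sub (integrable_const _) hHint, setIntegral_const]
  have h2 : ∫ y in S, H y ∂μ = ∫ t in T, D t * F t := by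
    rw [show (∫ y in S, H y ∂μ) = ∫ y, H y ∂(μ.restrict S) from rfl, hswap]
    exact setIntegral_congr_fun measurableSet_Ioc hinner
  rw [h2, measureReal_def, cdf_eq_Ico μ hμ0 F hF hFc hb0, smul_eq_mul, mul_comm]

lemma risk_diff_bound (μ ν : Measure ℝ) [IsProbabilityMeasure μ] [IsProbabilityMeasure ν]
    (hμ0 : μ (Set.Iio 0) = 0) (hν0 : ν (Set.Iio 0) = 0)
    (F Fn : ℝ → ℝ) (hF : ∀ y, F y = (μ (Set.Iic y)).toReal)
    (hFn : ∀ y, Fn y = (ν (Set.Iic y)).toReal)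
    (hFc : Continuous F) (hFnc : Continuous Fn)
    (A : ℝ) (G : ℝ → ℝ) (hG : DifferentiableOn ℝ G (Set.Icc 0 A))
    (K M : ℝ) (hK : ∀ y ∈ Set.Icc (0:ℝ) A, |derivWithin G (Set.Icc 0 A) y| ≤ K)
    (hM : ∀ y ∈ Set.Icc (0:ℝ) A, |G y| ≤ M)
    (d : ℝ) (hd : ∀ y : ℝ, 0 ≤ y → |Fn y - F y| ≤ d) (hd0 : 0 ≤ d)
    (b : ℝ) (hb0 : 0 ≤ b) (hbA : b ≤ A) :
    |(∫ y, (Set.Iio b).indicator G y ∂ν) - ∫ y, (Set.Iio b).indicator G y ∂μ|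
      ≤ (2 * M + K * A) * d := by
  have hA : (0 : ℝ) ≤ A := le_trans hb0 hbA
  have hM0 : (0 : ℝ) ≤ M := le_trans (abs_nonneg _) (hM 0 ⟨le_refl 0, hA⟩)
  have hK0 : (0 : ℝ) ≤ K := le_trans (abs_nonneg _) (hK 0 ⟨le_refl 0, hA⟩)
  set D : ℝ → ℝ := derivWithin G (Set.Icc 0 A) with hD
  set T : Set ℝ := Set.Ioc 0 b with hT
  -- measurability of D on T
  have hDeq : ∀ t ∈ Set.Ioo 0 A, D t = deriv G t := fun t ht =>
    derivWithin_of_mem_nhds (Icc_mem_nhds ht.1 ht.2)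
  have hDae : D =ᵐ[volume.restrict T] deriv G := by
    have hAe : ∀ᵐ t : ℝ ∂(volume.restrict T), t ≠ A := by
      refine ae_restrict_of_ae ?_
      have h0 : volume ({A} : Set ℝ) = 0 := Real.volume_singleton
      rw [ae_iff]
      convert h0 using 2
      ext x; simp
    have hmem : ∀ᵐ t : ℝ ∂(volume.restrict T), t ∈ T := ae_restrict_mem measurableSet_Ioc
    filter_upwards [hAe, hmem] with t htA ht
    exact hDeq t ⟨ht.1, lt_of_le_of_ne (le_trans ht.2 hbA) htA⟩
  have hDaesm : AEStronglyMeasurable D (volume.restrict T) :=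
    ((measurable_deriv G).aestronglyMeasurable).congr hDae.symm
  have hTfin : volume T < ⊤ := by rw [hT, Real.volume_Ioc]; exact ENNReal.ofReal_lt_top
  haveI : Fact (volume T < ⊤) := ⟨hTfin⟩
  haveI : IsFiniteMeasure (volume.restrict T) := Restrict.isFiniteMeasure volume
  have hmemK : ∀ t ∈ T, |D t| ≤ K := fun t ht => hK t ⟨le_of_lt ht.1, le_trans ht.2 hbA⟩
  have hFbd : ∀ (ρ : Measure ℝ) [IsProbabilityMeasure ρ], ∀ y : ℝ, |(ρ (Set.Iic y)).toReal| ≤ 1 := by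
    intro ρ hρ y
    rw [abs_of_nonneg ENNReal.toReal_nonneg]
    calc (ρ (Set.Iic y)).toReal ≤ (1 : ENNReal).toReal :=
        ENNReal.toReal_mono (by simp) prob_le_one
      _ = 1 := by simp
  have hFb : ∀ y : ℝ, |F y| ≤ 1 := fun y => by rw [hF]; exact hFbd μ y
  have hFnb : ∀ y : ℝ, |Fn y| ≤ 1 := fun y => by rw [hFn]; exact hFbd ν y
  have hint : ∀ (W : ℝ → ℝ), Continuous W → (∀ y, |W y| ≤ 1) →
      IntegrableOn (fun t => D t * W t) T := by
    intro W hWc hWb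
    refine Integrable.mono' (integrable_const K) (hDaesm.mul hWc.aestronglyMeasurable) ?_
    filter_upwards [ae_restrict_mem measurableSet_Ioc] with t ht
    rw [Real.norm_eq_abs, abs_mul]
    calc |D t| * |W t| ≤ K * 1 := mul_le_mul (hmemK t ht) (hWb t) (abs_nonneg _) hK0
      _ = K := mul_one K
  -- representation
  rw [risk_repr μ hμ0 F hF hFc A G hG K hK b hb0 hbA,
      risk_repr ν hν0 Fn hFn hFnc A G hG K hK b hb0 hbA]
  have hsub : (∫ t in T, D t * Fn t) - ∫ t in T, D t * F t
      = ∫ t in T, D t * (Fn t - F t) := by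
    rw [← integral_sub (hint Fn hFnc hFnb) (hint F hFc hFb)]
    congr 1; ext t; ring
  have hrw : (G b * Fn b - ∫ t in T, D t * Fn t) - (G b * F b - ∫ t in T, D t * F t)
      = G b * (Fn b - F b) - ∫ t in T, D t * (Fn t - F t) := by
    rw [← hsub]; ring
  rw [hrw]
  have hIbd : |∫ t in T, D t * (Fn t - F t)| ≤ K * d * b := by
    have hC : ∀ t ∈ T, ‖D t * (Fn t - F t)‖ ≤ K * d := by
      intro t ht
      rw [Real.norm_eq_abs, abs_mul]
      exact mul_le_mul (hmemK t ht) (hd t (le_of_lt ht.1)) (abs_nonneg _) hK0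
    have := norm_setIntegral_le_of_norm_le_const (C := K * d) hTfin
      (f := fun t => D t * (Fn t - F t)) hC
    rw [Real.norm_eq_abs] at this
    calc |∫ t in T, D t * (Fn t - F t)| ≤ K * d * (volume T).toReal := this
      _ = K * d * b := by rw [hT, Real.volume_Ioc, ENNReal.toReal_ofReal (by linarith)]; ring_nf
  calc |G b * (Fn b - F b) - ∫ t in T, D t * (Fn t - F t)|
      ≤ |G b * (Fn b - F b)| + |∫ t in T, D t * (Fn t - F t)| := abs_sub _ _
    _ ≤ M * d + K * d * b := by
        refine add_le_add ?_ hIbd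
        rw [abs_mul]
        exact mul_le_mul (hM b ⟨hb0, hbA⟩) (hd b hb0) (abs_nonneg _) hM0
    _ ≤ (2 * M + K * A) * d := by nlinarith [mul_le_mul_of_nonneg_left hbA (mul_nonneg hK0 hd0)]

/-- Theorem 3: Let `Y` and `Ŷₙ` be nonnegative (a.s.) random variables
(represented by their laws `μ` and `νₙ`) with continuous CDFs `F` and `Fₙ`, and suppose
`δₙ = sup_{y ∈ [0,∞)} |Fₙ(y) - F(y)| → 0`. Let `a : [0, l̄] → ℝ` be monotone with
`0 ≤ a(l) ≤ a(l̄)` and `a(l) → 0` as `l → 0`, and let each `g_l` be differentiable on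
`[0, a(l̄)]` with `|g_l'| ≤ K` there and uniformly bounded by `M := g_{l̄}(0)`. With
`r₃(l) = E[g_l(Y)·1{Y < a(l)}]` and `r̂₃,ₙ(l) = E[g_l(Ŷₙ)·1{Ŷₙ < a(l)}]`, we have
`sup_{l ∈ [0, l̄]} |r̂₃,ₙ(l) - r₃(l)| ≤ (2M + K·a(l̄))·δₙ → 0`. -/
theorem generalized_risk_uniform_convergence
    (μ : ProbabilityMeasure ℝ) (ν : ℕ → ProbabilityMeasure ℝ)
    (hμ0 : (μ : Measure ℝ) (Set.Iio 0) = 0)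
    (hν0 : ∀ n, ((ν n : Measure ℝ)) (Set.Iio 0) = 0)
    (F : ℝ → ℝ) (Fn : ℕ → ℝ → ℝ)
    (hF : ∀ y, F y = ((μ : Measure ℝ) (Set.Iic y)).toReal)
    (hFn : ∀ n y, Fn n y = (((ν n : Measure ℝ)) (Set.Iic y)).toReal)
    (hFc : Continuous F) (hFnc : ∀ n, Continuous (Fn n))
    (δ : ℕ → ℝ) (hδ : ∀ n, δ n = ⨆ y : Set.Ici (0 : ℝ), |Fn n y - F y|)
    (hδ0 : Tendsto δ atTop (nhds 0))
    (lbar K : ℝ) (hlbar : 0 < lbar)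
    (a : ℝ → ℝ) (ha_mono : MonotoneOn a (Set.Icc 0 lbar))
    (ha_nonneg : ∀ l ∈ Set.Icc (0 : ℝ) lbar, 0 ≤ a l)
    (ha_le : ∀ l ∈ Set.Icc (0 : ℝ) lbar, a l ≤ a lbar)
    (ha0 : Tendsto a (nhdsWithin 0 (Set.Icc 0 lbar)) (nhds 0))
    (g : ℝ → ℝ → ℝ)
    (hgdiff : ∀ l ∈ Set.Icc (0 : ℝ) lbar, DifferentiableOn ℝ (g l) (Set.Icc 0 (a lbar)))
    (hgK : ∀ l ∈ Set.Icc (0 : ℝ) lbar, ∀ y ∈ Set.Icc (0 : ℝ) (a lbar),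
      |derivWithin (g l) (Set.Icc 0 (a lbar)) y| ≤ K)
    (hgM : ∀ l ∈ Set.Icc (0 : ℝ) lbar, ∀ y ∈ Set.Icc (0 : ℝ) (a lbar),
      |g l y| ≤ g lbar 0) :
    (∀ n, (⨆ l : Set.Icc (0 : ℝ) lbar,
        |(∫ y, (Set.Iio (a (l : ℝ))).indicator (g (l : ℝ)) y ∂(ν n : Measure ℝ))
          - ∫ y, (Set.Iio (a (l : ℝ))).indicator (g (l : ℝ)) y ∂(μ : Measure ℝ)|)
        ≤ (2 * g lbar 0 + K * a lbar) * δ n)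
    ∧ Tendsto (fun n => ⨆ l : Set.Icc (0 : ℝ) lbar,
        |(∫ y, (Set.Iio (a (l : ℝ))).indicator (g (l : ℝ)) y ∂(ν n : Measure ℝ))
          - ∫ y, (Set.Iio (a (l : ℝ))).indicator (g (l : ℝ)) y ∂(μ : Measure ℝ)|)
        atTop (nhds 0) := by
  have hlmem : lbar ∈ Set.Icc (0:ℝ) lbar := ⟨le_of_lt hlbar, le_rfl⟩
  have hA0 : 0 ≤ a lbar := ha_nonneg lbar hlmem
  have h0A : (0:ℝ) ∈ Set.Icc (0:ℝ) (a lbar) := ⟨le_rfl, hA0⟩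
  have hM0 : 0 ≤ g lbar 0 := le_trans (abs_nonneg _) (hgM lbar hlmem 0 h0A)
  have hK0 : 0 ≤ K := le_trans (abs_nonneg _) (hgK lbar hlmem 0 h0A)
  have hδnn : ∀ n, 0 ≤ δ n := by
    intro n
    rw [hδ n]
    exact Real.iSup_nonneg fun y => abs_nonneg _
  have hdbd : ∀ n, ∀ y : ℝ, 0 ≤ y → |Fn n y - F y| ≤ δ n := by
    intro n y hy
    rw [hδ n]
    have hbdd : BddAbove (Set.range fun y : Set.Ici (0:ℝ) => |Fn n (y:ℝ) - F (y:ℝ)|) := by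
      refine ⟨2, ?_⟩
      rintro _ ⟨z, rfl⟩
      have h1 : |Fn n (z:ℝ)| ≤ 1 := by
        rw [hFn, abs_of_nonneg ENNReal.toReal_nonneg]
        calc ((ν n : Measure ℝ) (Set.Iic (z:ℝ))).toReal ≤ (1:ENNReal).toReal :=
            ENNReal.toReal_mono (by simp) prob_le_one
          _ = 1 := by simp
      have h2 : |F (z:ℝ)| ≤ 1 := by
        rw [hF, abs_of_nonneg ENNReal.toReal_nonneg]
        calc ((μ : Measure ℝ) (Set.Iic (z:ℝ))).toReal ≤ (1:ENNReal).toReal :=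
            ENNReal.toReal_mono (by simp) prob_le_one
          _ = 1 := by simp
      calc |Fn n (z:ℝ) - F (z:ℝ)| ≤ |Fn n (z:ℝ)| + |F (z:ℝ)| := abs_sub _ _
        _ ≤ 2 := by linarith
    exact le_ciSup hbdd (⟨y, hy⟩ : Set.Ici (0:ℝ))
  have hbound : ∀ n, ∀ l : Set.Icc (0:ℝ) lbar,
      |(∫ y, (Set.Iio (a (l:ℝ))).indicator (g (l:ℝ)) y ∂(ν n : Measure ℝ))
        - ∫ y, (Set.Iio (a (l:ℝ))).indicator (g (l:ℝ)) y ∂(μ : Measure ℝ)|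
      ≤ (2 * g lbar 0 + K * a lbar) * δ n := by
    rintro n ⟨l, hl⟩
    exact risk_diff_bound (μ : Measure ℝ) ((ν n : Measure ℝ)) hμ0 (hν0 n)
      F (Fn n) hF (hFn n) hFc (hFnc n) (a lbar) (g l) (hgdiff l hl)
      K (g lbar 0) (hgK l hl) (hgM l hl) (δ n) (hdbd n) (hδnn n)
      (a l) (ha_nonneg l hl) (ha_le l hl)
  have hCnn : 0 ≤ 2 * g lbar 0 + K * a lbar := by positivity
  constructor
  · intro n
    exact Real.iSup_le (hbound n) (mul_nonneg hCnn (hδnn n))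
  · apply squeeze_zero
    · intro n
      exact Real.iSup_nonneg fun l => abs_nonneg _
    · intro n
      exact Real.iSup_le (hbound n) (mul_nonneg hCnn (hδnn n))
    · simpa using hδ0.const_mul (2 * g lbar 0 + K * a lbar)
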